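/- Let L be a relational language, T a Gaifman clique L-structure (for every a, b ∈ T there is a relation symbol R of arity m ≥ 2 and a tuple (c₁,…,c_m) with a, b among the cᵢ and R^T(c₁,…,c_m)). Let D be the free amalgamation of L-structures C₁ and C₂ over a common substructure C. If h : T → D is a homomorphism, then h(T) ⊆ C₁ or h(T) ⊆ C₂. -/
import Mathlib


open FirstOrder

/-- A homomorphism from a Gaifman clique `T` into the free amalgamation `D` of `C₁`
(domain `A`, relations `r₁`) and `C₂` (domain `B`, relations `r₂`), whose relations
are `r₁ ∪ r₂`, lands entirely in `C₁` or entirely in `C₂`. -/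
theorem stmt13 {L : FirstOrder.Language} [L.IsRelational] {D T : Type*} [L.Structure T]
    (A B : Set D)
    (r₁ r₂ : ∀ n, L.Relations n → Set (Fin n → D))
    (h₁ : ∀ (n : ℕ) (R : L.Relations n) (t : Fin n → D), t ∈ r₁ n R → ∀ i, t i ∈ A)
    (h₂ : ∀ (n : ℕ) (R : L.Relations n) (t : Fin n → D), t ∈ r₂ n R → ∀ i, t i ∈ B)
    (hclique : ∀ a b : T, ∃ m : ℕ, 2 ≤ m ∧ ∃ (R : L.Relations m) (c : Fin m → T),
      (∃ i, c i = a) ∧ (∃ i, c i = b) ∧ FirstOrder.Language.Structure.RelMap R c)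
    (h : T → D)
    (hhom : ∀ (n : ℕ) (R : L.Relations n) (c : Fin n → T),
      FirstOrder.Language.Structure.RelMap R c → (fun i => h (c i)) ∈ r₁ n R ∪ r₂ n R) :
    (∀ x, h x ∈ A) ∨ (∀ x, h x ∈ B) := by
  by_cases hA : ∀ x, h x ∈ A
  · exact Or.inl hA
  · push_neg at hA
    obtain ⟨x, hx⟩ := hA
    refine Or.inr fun y => ?_
    obtain ⟨m, _, R, c, ⟨i, hi⟩, ⟨j, hj⟩, hR⟩ := hclique x y
    rcases hhom m R c hR with hr | hr
    · exact absurd (hi ▸ h₁ m R _ hr i) hx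
    · exact hj ▸ h₂ m R _ hr j
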